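/- Stirling's formula with explicit remainder: for every real x > 0, x! = Γ(x+1) = √(2π) e^{-x} x^{x+1/2} e^{θ(x)/x} for some θ(x) with 0 ≤ θ(x) ≤ 1/12. -/

import Mathlib

open Real Filter Finset Topology

noncomputable def sg (y : ℝ) : ℝ := (y + 1/2) * Real.log (1 + y⁻¹) - 1

lemma sg_eq {y : ℝ} (hy : 0 < y) :
    sg y = (y + 1/2) * (Real.log (y + 1) - Real.log y) - 1 := by
  rw [sg, show (1 : ℝ) + y⁻¹ = (y+1)/y by field_simp, Real.log_div (by linarith) hy.ne']

lemma sg_hasSum {y : ℝ} (hy : 0 < y) :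
    HasSum (fun k : ℕ => (1 : ℝ) / (2 * (k+1 : ℕ) + 1) * ((1 / (2 * y + 1)) ^ 2) ^ ((k:ℕ)+1))
      (sg y) := by
  let f (k : ℕ) := (1 : ℝ) / (2 * k + 1) * ((1 / (2 * y + 1)) ^ 2) ^ k
  change HasSum (fun k => f (k + 1)) _
  rw [hasSum_nat_add_iff]
  have := (Real.hasSum_log_one_add_inv hy).mul_left (y + 1/2)
  convert this using 1
  · rfl
  · ext k
    dsimp only [f]
    rw [← pow_mul, pow_add]
    push_cast
    have h1 : (2 : ℝ) * y + 1 ≠ 0 := by positivity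
    have h2 : (2 : ℝ) * k + 1 ≠ 0 := by positivity
    field_simp
  · simp only [sg, f, range_one, sum_singleton]
    push_cast
    ring

lemma sg_nonneg {y : ℝ} (hy : 0 < y) : 0 ≤ sg y :=
  (sg_hasSum hy).nonneg fun k => by positivity

lemma sg_le {y : ℝ} (hy : 0 < y) : sg y ≤ 1/12 * (1/y - 1/(y+1)) := by
  set q : ℝ := (1 / (2 * y + 1)) ^ 2 with hq
  have hq0 : 0 ≤ q := sq_nonneg _
  have hq1 : q < 1 := by
    rw [hq, one_div, inv_pow]
    exact inv_lt_one_of_one_lt₀ (one_lt_pow₀ (by nlinarith) two_ne_zero)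
  have hgeo : HasSum (fun k : ℕ => (1/3 : ℝ) * q ^ (k + 1)) ((1/3) * (q / (1 - q))) := by
    have h := (hasSum_geometric_of_lt_one hq0 hq1).mul_left ((1/3 : ℝ) * q)
    have h2 : (1/3 : ℝ) * q * (1-q)⁻¹ = (1/3) * (q / (1-q)) := by ring
    rw [h2] at h
    refine h.congr_fun fun k => ?_
    ring
  have hle : sg y ≤ (1/3) * (q / (1 - q)) := by
    refine hasSum_le (fun k => ?_) (sg_hasSum hy) hgeo
    have : (1 : ℝ) / (2 * ((k:ℝ)+1) + 1) ≤ 1/3 := by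
      rw [div_le_div_iff₀ (by positivity) (by norm_num)]
      have : (0:ℝ) ≤ (k:ℝ) := k.cast_nonneg
      linarith
    push_cast
    exact mul_le_mul_of_nonneg_right this (pow_nonneg hq0 _)
  refine hle.trans (le_of_eq ?_)
  have h1 : (2:ℝ) * y + 1 ≠ 0 := by positivity
  have h2 : (1:ℝ) - q ≠ 0 := by linarith
  have h3 : (y*12 + y^2*12 : ℝ) ≠ 0 := by positivity
  rw [hq]
  field_simp
  rw [div_eq_iff (by nlinarith)]
  ring

lemma telescope_hasSum {x : ℝ} (hx : 0 < x) :
    HasSum (fun n : ℕ => 1/12 * (1/(x+n) - 1/(x+n+1))) (1/(12*x)) := by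
  have hnn : ∀ n : ℕ, (0:ℝ) ≤ 1/12 * (1/(x+n) - 1/(x+n+1)) := by
    intro n
    have h1 : (0:ℝ) < x + n := by positivity
    have h2 : (0:ℝ) < x + n + 1 := by positivity
    have : (1:ℝ)/(x+n+1) ≤ 1/(x+n) := by
      apply one_div_le_one_div_of_le h1; linarith
    linarith
  rw [hasSum_iff_tendsto_nat_of_nonneg hnn]
  have key : ∀ N : ℕ, ∑ n ∈ Finset.range N, (1/12 * (1/(x+n) - 1/(x+n+1)))
      = 1/12 * (1/x) - 1/12 * (1/(x+N)) := by
    intro N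
    have h := Finset.sum_range_sub' (fun n : ℕ => 1/12 * (1/(x+(n:ℝ)))) N
    simp only [Nat.cast_add, Nat.cast_one, Nat.cast_zero, add_zero] at h
    rw [← h]
    apply Finset.sum_congr rfl
    intro n _
    push_cast
    ring
  simp only [key]
  have h1 : Filter.Tendsto (fun N : ℕ => 1/12 * (1/(x+N))) Filter.atTop (nhds 0) := by
    have : Filter.Tendsto (fun N : ℕ => x + (N:ℝ)) Filter.atTop Filter.atTop :=
      Filter.tendsto_atTop_add_const_left _ _ tendsto_natCast_atTop_atTop
    simpa using (this.inv_tendsto_atTop).const_mul (1/12 : ℝ)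
  have := (tendsto_const_nhds (x := (1:ℝ)/12 * (1/x))).sub h1
  have h2 : (1:ℝ)/(12*x) = 1/12 * (1/x) - 0 := by ring
  rw [h2]
  exact this

lemma sg_summable {x : ℝ} (hx : 0 < x) : Summable (fun n : ℕ => sg (x+n)) := by
  refine Summable.of_nonneg_of_le (fun n => sg_nonneg (by positivity))
    (fun n => ?_) (telescope_hasSum hx).summable
  have := sg_le (y := x + n) (by positivity)
  simpa [add_assoc] using this

lemma sg_tsum_nonneg {x : ℝ} (hx : 0 < x) : 0 ≤ ∑' n : ℕ, sg (x+n) :=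
  tsum_nonneg fun n => sg_nonneg (by positivity)

lemma sg_tsum_le {x : ℝ} (hx : 0 < x) : ∑' n : ℕ, sg (x+n) ≤ 1/(12*x) := by
  rw [← (telescope_hasSum hx).tsum_eq]
  refine Summable.tsum_le_tsum (fun n => ?_) (sg_summable hx) (telescope_hasSum hx).summable
  have := sg_le (y := x + n) (by positivity)
  simpa [add_assoc] using this

lemma key_identity {x : ℝ} (hx : 0 < x) (N : ℕ) :
    Real.BohrMollerup.logGammaSeq x (N+1)
      = (x - 1/2) * Real.log x - x + (∑ m ∈ Finset.range (N+1), sg (x+m))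
        + (x * Real.log ((N:ℝ)+1) + Real.log (Nat.factorial (N+1)) + ((N:ℝ)+1) + x
           - (x + ((N:ℝ)+1) + 1/2) * Real.log (x + ((N:ℝ)+1))) := by
  induction N with
  | zero =>
    simp only [Real.BohrMollerup.logGammaSeq, Finset.sum_range_succ, Finset.sum_range_zero,
      Nat.cast_zero, Nat.cast_one, add_zero, zero_add, Nat.factorial_one, Real.log_one]
    rw [sg_eq hx]
    ring
  | succ N ih =>
    have h1 : (0:ℝ) < (N:ℝ) + 1 := by positivity
    have h2 : (0:ℝ) < (N:ℝ) + 2 := by positivity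
    simp only [Real.BohrMollerup.logGammaSeq] at ih ⊢
    rw [Finset.sum_range_succ (fun m : ℕ => Real.log (x + m)) (N+2),
        Finset.sum_range_succ (fun m : ℕ => sg (x + m)) (N+1),
        Nat.factorial_succ (N+1)]
    rw [sg_eq (y := x + ((N:ℕ)+1:ℕ)) (by positivity)]
    push_cast at ih ⊢
    rw [Real.log_mul (by positivity) (by positivity)]
    ring_nf at ih ⊢
    linear_combination ih

lemma C_tendsto {x : ℝ} (hx : 0 < x) :
    Tendsto (fun N : ℕ => x * Real.log N + Real.log (Nat.factorial N) + (N:ℝ) + x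
      - (x + (N:ℝ) + 1/2) * Real.log (x + (N:ℝ))) atTop
      (𝓝 (Real.log (Real.sqrt (2*π)))) := by
  have hsp : Real.sqrt π ≠ 0 := by positivity
  have T1 : Tendsto (fun N : ℕ => Real.log (Stirling.stirlingSeq N)) atTop
      (𝓝 (Real.log (Real.sqrt π))) := Stirling.tendsto_stirlingSeq_sqrt_pi.log hsp
  have hdiv : Tendsto (fun N : ℕ => x / (N:ℝ)) atTop (𝓝 0) :=
    tendsto_const_div_atTop_nhds_zero_nat x
  have T3 : Tendsto (fun N : ℕ => Real.log (1 + x/(N:ℝ))) atTop (𝓝 0) := by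
    have := (hdiv.const_add 1).log (by norm_num)
    simpa using this
  have T2 : Tendsto (fun N : ℕ => ((N:ℝ)) * Real.log (1 + x/(N:ℝ))) atTop (𝓝 x) :=
    (Real.tendsto_mul_log_one_add_div_atTop x).comp tendsto_natCast_atTop_atTop
  have Tall := ((T1.add_const ((1:ℝ)/2 * Real.log 2)).add_const x).sub
    (T2.add (T3.const_mul (x + 1/2)))
  have hlim : Real.log (Real.sqrt π) + 1/2 * Real.log 2 + x - (x + (x + 1/2) * 0)
      = Real.log (Real.sqrt (2*π)) := by
    rw [Real.log_sqrt (by positivity : (0:ℝ) ≤ 2*π), Real.log_sqrt pi_pos.le,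
      Real.log_mul two_ne_zero pi_pos.ne']
    ring
  rw [hlim] at Tall
  refine Tall.congr' ?_
  filter_upwards [eventually_ge_atTop 1] with N hN
  have hN0 : (0:ℝ) < (N:ℝ) := by exact_mod_cast hN
  have hden : Real.sqrt (2*(N:ℝ)) * ((N:ℝ)/Real.exp 1)^N ≠ 0 := by positivity
  have hfact : Real.log ((Nat.factorial N : ℕ) : ℝ)
      = Real.log (Stirling.stirlingSeq N) + 1/2 * Real.log (2*(N:ℝ))
        + (N:ℝ) * (Real.log N - 1) := by
    rw [Stirling.stirlingSeq, Real.log_div (by positivity) hden,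
      Real.log_mul (by positivity) (by positivity), Real.log_pow,
      Real.log_div hN0.ne' (Real.exp_ne_zero 1), Real.log_exp,
      Real.log_sqrt (by positivity)]
    push_cast
    ring
  have hlog1 : Real.log (1 + x/(N:ℝ)) = Real.log (x + (N:ℝ)) - Real.log N := by
    rw [show (1:ℝ) + x/(N:ℝ) = (x + N)/N by field_simp; ring, Real.log_div (by positivity) hN0.ne']
  rw [Real.log_mul two_ne_zero hN0.ne'] at hfact
  rw [hfact, hlog1]
  ring

lemma binet {x : ℝ} (hx : 0 < x) :
    Real.Gamma x = Real.sqrt (2*π) * x ^ (x - 1/2) * Real.exp (-x)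
      * Real.exp (∑' n : ℕ, sg (x+n)) := by
  set μ := ∑' n : ℕ, sg (x+n) with hμ
  have hsum : HasSum (fun n : ℕ => sg (x+n)) μ := (sg_summable hx).hasSum
  have hB : Tendsto (fun N : ℕ => ∑ m ∈ Finset.range (N+1), sg (x+(m:ℝ))) atTop (𝓝 μ) :=
    (tendsto_add_atTop_iff_nat 1).2 hsum.tendsto_sum_nat
  have hC : Tendsto (fun N : ℕ => x * Real.log ((N:ℝ)+1) + Real.log (Nat.factorial (N+1))
      + ((N:ℝ)+1) + x - (x + ((N:ℝ)+1) + 1/2) * Real.log (x + ((N:ℝ)+1))) atTop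
      (𝓝 (Real.log (Real.sqrt (2*π)))) := by
    have h := (tendsto_add_atTop_iff_nat 1).2 (C_tendsto hx)
    refine h.congr fun N => ?_
    push_cast
    ring
  have hA : Tendsto (fun N : ℕ => Real.BohrMollerup.logGammaSeq x (N+1)) atTop
      (𝓝 ((x - 1/2) * Real.log x - x + μ + Real.log (Real.sqrt (2*π)))) := by
    have h := (hB.const_add ((x - 1/2) * Real.log x - x)).add hC
    exact h.congr fun N => (key_identity hx N).symm
  have hA' : Tendsto (Real.BohrMollerup.logGammaSeq x) atTop
      (𝓝 ((x - 1/2) * Real.log x - x + μ + Real.log (Real.sqrt (2*π)))) :=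
    (tendsto_add_atTop_iff_nat 1).1 hA
  have hlg : Real.log (Real.Gamma x)
      = (x - 1/2) * Real.log x - x + μ + Real.log (Real.sqrt (2*π)) :=
    tendsto_nhds_unique (Real.BohrMollerup.tendsto_log_gamma hx) hA'
  have hG : Real.Gamma x = Real.exp (Real.log (Real.Gamma x)) :=
    (Real.exp_log (Real.Gamma_pos_of_pos hx)).symm
  rw [hG, hlg, show (x - 1/2) * Real.log x - x + μ + Real.log (Real.sqrt (2*π))
      = Real.log (Real.sqrt (2*π)) + Real.log x * (x - 1/2) + (-x) + μ from by ring,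
    Real.exp_add, Real.exp_add, Real.exp_add,
    Real.exp_log (by positivity : (0:ℝ) < Real.sqrt (2*π)),
    ← Real.rpow_def_of_pos hx]

open Real

/-- Stirling's formula with explicit remainder: for all `x > 0`,
`Γ(x+1) = √(2π) e^{-x} x^{x+1/2} e^{θ(x)/x}` with `0 ≤ θ(x) ≤ 1/12`. -/
theorem stmt9 (x : ℝ) (hx : 0 < x) :
    ∃ θ : ℝ, 0 ≤ θ ∧ θ ≤ 1/12 ∧
      Real.Gamma (x + 1)
        = Real.sqrt (2 * π) * Real.exp (-x) * x ^ (x + 1/2) * Real.exp (θ / x) := by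
  set μ := ∑' n : ℕ, sg (x+n) with hμ
  refine ⟨x * μ, mul_nonneg hx.le (sg_tsum_nonneg hx), ?_, ?_⟩
  · have h := sg_tsum_le hx
    calc x * μ ≤ x * (1/(12*x)) := mul_le_mul_of_nonneg_left h hx.le
    _ = 1/12 := by field_simp
  · have hdiv : x * μ / x = μ := by field_simp
    rw [hdiv, Real.Gamma_add_one hx.ne', binet hx, ← hμ,
      show x + 1/2 = (x - 1/2) + 1 from by ring, Real.rpow_add hx, Real.rpow_one]
    ring
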